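/- Over the four-letter alphabet {1, 2, u, d}, the language generated by the regular expression (1*(2|u)*d)*1⁺ (where * is the Kleene star and 1⁺ means one or more copies of the letter 1) is exactly the set of nonempty words that end in the letter 1 and contain no factor (contiguous substring) 21 and no factor u1. -/

import Mathlib

/-- The four-letter alphabet `{1, 2, u, d}`. -/
inductive Ar : Type
  | one : Ar
  | two : Ar
  | u : Ar
  | d : Ar
deriving DecidableEq

open RegularExpression in
/-- The regular expression `(1*(2|u)*d)*1⁺` over the alphabet `{1, 2, u, d}`. -/
def rectRegex : RegularExpression Ar :=
  ((char Ar.one).star * (char Ar.two + char Ar.u).star * char Ar.d).star *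
    (char Ar.one * (char Ar.one).star)

namespace RectAux

lemma chain'_nil {R : Ar → Ar → Prop} : List.Chain' R [] := List.isChain_nil

lemma chain'_cons' {R : Ar → Ar → Prop} {x : Ar} {l : List Ar} :
    List.Chain' R (x :: l) ↔ (∀ y ∈ l.head?, R x y) ∧ List.Chain' R l := List.isChain_cons

lemma chain'_append {R : Ar → Ar → Prop} {l₁ l₂ : List Ar} :
    List.Chain' R (l₁ ++ l₂) ↔ List.Chain' R l₁ ∧ List.Chain' R l₂ ∧
      ∀ x ∈ l₁.getLast?, ∀ y ∈ l₂.head?, R x y := List.isChain_append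

def R (a b : Ar) : Prop := b = Ar.one → a = Ar.one ∨ a = Ar.d

lemma R_one (b : Ar) : R Ar.one b := fun _ => Or.inl rfl
lemma R_d (b : Ar) : R Ar.d b := fun _ => Or.inr rfl
lemma R_of_ne (a b : Ar) (h : b ≠ Ar.one) : R a b := fun hb => absurd hb h

lemma chain_all_one : ∀ l : List Ar, (∀ c ∈ l, c = Ar.one) → List.Chain' R l := by
  intro l h
  induction l with
  | nil => exact chain'_nil
  | cons a t ih =>
    rw [chain'_cons']
    refine ⟨fun y _ => ?_, ih fun c hc => h c (List.mem_cons_of_mem _ hc)⟩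
    rw [h a (List.mem_cons_self)]; exact R_one y

lemma chain_no_one : ∀ l : List Ar, (∀ c ∈ l, c ≠ Ar.one) → List.Chain' R l := by
  intro l h
  induction l with
  | nil => exact chain'_nil
  | cons a t ih =>
    rw [chain'_cons']
    refine ⟨fun y hy => ?_, ih fun c hc => h c (List.mem_cons_of_mem _ hc)⟩
    exact R_of_ne _ _ (h y (List.mem_cons_of_mem _ (List.mem_of_mem_head? hy)))

lemma chain_iff (w : List Ar) :
    List.Chain' R w ↔ ¬ [Ar.two, Ar.one] <:+: w ∧ ¬ [Ar.u, Ar.one] <:+: w := by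
  constructor
  · intro h
    constructor <;> intro hinf <;> {
      have h2 := (h.infix hinf)
      rw [List.isChain_cons] at h2
      rcases h2.1 Ar.one rfl rfl with h1 | h1 <;> exact Ar.noConfusion h1 }
  · intro hh
    induction w with
    | nil => exact chain'_nil
    | cons a t ih =>
      rw [chain'_cons']
      constructor
      · intro y hy hy1
        subst hy1
        cases t with
        | nil => exact absurd hy (by simp)
        | cons b t' =>
          have hb : b = Ar.one := by simpa using hy
          subst hb
          cases a with
          | one => exact Or.inl rfl
          | d => exact Or.inr rfl
          | two => exact absurd ⟨[], t', by simp⟩ hh.1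
          | u => exact absurd ⟨[], t', by simp⟩ hh.2
      · exact ih ⟨fun hi => hh.1 (hi.trans (List.suffix_cons a t).isInfix),
          fun hi => hh.2 (hi.trans (List.suffix_cons a t).isInfix)⟩

lemma mem_kstar_of_forall {m : Language Ar} (l : List Ar) (h : ∀ c ∈ l, [c] ∈ m) :
    l ∈ KStar.kstar m := by
  rw [Language.mem_kstar]
  refine ⟨l.map fun c => [c], ?_, ?_⟩
  · induction l with
    | nil => rfl
    | cons a t ih => simpa using ih fun c hc => h c (List.mem_cons_of_mem _ hc)
  · intro y hy
    obtain ⟨c, hc, rfl⟩ := List.mem_map.mp hy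
    exact h c hc

lemma append_mem_kstar {m : Language Ar} {a x : List Ar} (ha : a ∈ m)
    (hx : x ∈ KStar.kstar m) : a ++ x ∈ KStar.kstar m := by
  rw [Language.mem_kstar] at hx ⊢
  obtain ⟨L, rfl, hL⟩ := hx
  refine ⟨a :: L, rfl, fun y hy => ?_⟩
  rcases List.mem_cons.mp hy with rfl | hy'
  exacts [ha, hL y hy']

lemma forall_of_mem_kstar_singleton {a : Ar} {x : List Ar}
    (hx : x ∈ KStar.kstar ({[a]} : Language Ar)) : ∀ c ∈ x, c = a := by
  rw [Language.mem_kstar] at hx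
  obtain ⟨L, rfl, hL⟩ := hx
  intro c hc
  obtain ⟨y, hy, hcy⟩ := List.mem_flatten.mp hc
  have : y = [a] := hL y hy
  subst this
  simpa using hcy

lemma forall_of_mem_kstar_add {x : List Ar}
    (hx : x ∈ KStar.kstar (({[Ar.two]} : Language Ar) + {[Ar.u]})) :
    ∀ c ∈ x, c = Ar.two ∨ c = Ar.u := by
  rw [Language.mem_kstar] at hx
  obtain ⟨L, rfl, hL⟩ := hx
  intro c hc
  obtain ⟨y, hy, hcy⟩ := List.mem_flatten.mp hc
  rcases (Language.mem_add _ _ _).mp (hL y hy) with h | h <;>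
    · have : y = _ := h
      subst this
      simp at hcy
      simp [hcy]

/-- The block language `1*(2|u)*d`. -/
def Bl : Language Ar :=
  KStar.kstar ({[Ar.one]} : Language Ar) *
    KStar.kstar (({[Ar.two]} : Language Ar) + {[Ar.u]}) * {[Ar.d]}

lemma matches_eq : rectRegex.matches' =
    KStar.kstar Bl * (({[Ar.one]} : Language Ar) * KStar.kstar ({[Ar.one]} : Language Ar)) := by
  simp [rectRegex, Bl, RegularExpression.matches'_mul, RegularExpression.matches'_star,
    RegularExpression.matches'_char, RegularExpression.matches'_add]

lemma block_mem {p q : List Ar} (hp : ∀ c ∈ p, c = Ar.one)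
    (hq : ∀ c ∈ q, c = Ar.two ∨ c = Ar.u) : p ++ q ++ [Ar.d] ∈ Bl := by
  rw [Bl, Language.mem_mul]
  refine ⟨p ++ q, ?_, [Ar.d], rfl, rfl⟩
  rw [Language.mem_mul]
  refine ⟨p, mem_kstar_of_forall p fun c hc => by rw [hp c hc]; rfl,
    q, mem_kstar_of_forall q fun c hc => ?_, rfl⟩
  rw [Language.mem_add]
  rcases hq c hc with h | h <;> rw [h]
  · exact Or.inl rfl
  · exact Or.inr rfl

lemma block_spec {b : List Ar} (hb : b ∈ Bl) :
    List.Chain' R b ∧ b.getLast? = some Ar.d := by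
  rw [Bl, Language.mem_mul] at hb
  obtain ⟨pq, hpq, dd, hdd, rfl⟩ := hb
  have hdd' : dd = [Ar.d] := hdd
  subst hdd'
  rw [Language.mem_mul] at hpq
  obtain ⟨p, hp, q, hq, rfl⟩ := hpq
  have hp' := forall_of_mem_kstar_singleton hp
  have hq' := forall_of_mem_kstar_add hq
  constructor
  · rw [List.append_assoc, chain'_append]
    refine ⟨chain_all_one p hp', ?_, ?_⟩
    · apply chain_no_one
      intro c hc
      rcases List.mem_append.mp hc with h | h
      · rcases hq' c h with h1 | h1 <;> simp [h1]
      · simp at h; simp [h]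
    · intro x _ y hy _
      exact Or.inl (hp' x (List.mem_of_mem_getLast? ‹_›))
  · rw [List.append_assoc]
    rw [List.getLast?_append]
    simp

lemma join_spec : ∀ L : List (List Ar), (∀ b ∈ L, b ∈ Bl) →
    List.Chain' R L.flatten ∧ ∀ c, L.flatten.getLast? = some c → c = Ar.d := by
  intro L hL
  induction L with
  | nil => exact ⟨chain'_nil, fun c hc => by simp at hc⟩
  | cons b L ih =>
    have hb := block_spec (hL b (List.mem_cons_self))
    have ihr := ih fun b' hb' => hL b' (List.mem_cons_of_mem _ hb')
    rw [List.flatten_cons]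
    constructor
    · rw [chain'_append]
      refine ⟨hb.1, ihr.1, fun x hx y _ => ?_⟩
      rw [hb.2] at hx
      simp at hx
      rw [← hx]; exact R_d y
    · intro c hc
      rw [List.getLast?_append] at hc
      cases hfl : L.flatten.getLast? with
      | none => rw [hfl] at hc; rw [hb.2] at hc; simp [Option.or] at hc; exact hc.symm
      | some c' =>
        rw [hfl] at hc; simp [Option.or] at hc
        rw [← hc]; exact ihr.2 c' hfl

lemma getLast?_all_one {l : List Ar} (hne : l ≠ []) (h : ∀ c ∈ l, c = Ar.one) :
    l.getLast? = some Ar.one := by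
  rw [List.getLast?_eq_getLast hne]
  rw [h _ (List.getLast_mem hne)]

lemma forward {w : List Ar} (h : w ∈ rectRegex.matches') :
    w ≠ [] ∧ w.getLast? = some Ar.one ∧ List.Chain' R w := by
  rw [matches_eq, Language.mem_mul] at h
  obtain ⟨x, hx, y, hy, rfl⟩ := h
  rw [Language.mem_mul] at hy
  obtain ⟨o, ho, y', hy', rfl⟩ := hy
  have ho' : o = [Ar.one] := ho
  subst ho'
  have hy'' := forall_of_mem_kstar_singleton hy'
  rw [Language.mem_kstar] at hx
  obtain ⟨L, rfl, hL⟩ := hx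
  have hj := join_spec L hL
  have hones : ∀ c ∈ [Ar.one] ++ y', c = Ar.one := by
    intro c hc
    rcases List.mem_append.mp hc with h | h
    · simpa using h
    · exact hy'' c h
  refine ⟨by simp, ?_, ?_⟩
  · rw [List.getLast?_append, getLast?_all_one (by simp) hones]
    rfl
  · rw [chain'_append]
    refine ⟨hj.1, chain_all_one _ hones, fun p hp q _ => ?_⟩
    rw [hj.2 p hp]
    exact R_d q

lemma no_one_of_head : ∀ l : List Ar, List.Chain' R l → Ar.d ∉ l →
    (∀ c, l.head? = some c → c ≠ Ar.one) → Ar.one ∉ l := by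
  intro l
  induction l with
  | nil => intro _ _ _; simp
  | cons a t ih =>
    intro hc hd hh
    have ha1 : a ≠ Ar.one := hh a rfl
    have had : a ≠ Ar.d := fun h => hd (h ▸ List.mem_cons_self)
    rw [chain'_cons'] at hc
    intro hmem
    rcases List.mem_cons.mp hmem with h | h
    · exact ha1 h.symm
    · refine ih hc.2 (fun h' => hd (List.mem_cons_of_mem _ h')) ?_ h
      intro c hcc hc1
      subst hc1
      rcases hc.1 _ hcc rfl with h' | h'
      exacts [ha1 h', had h']

lemma split_free : ∀ s : List Ar, List.Chain' R s → Ar.d ∉ s →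
    ∃ p q, s = p ++ q ∧ (∀ c ∈ p, c = Ar.one) ∧ (∀ c ∈ q, c = Ar.two ∨ c = Ar.u) := by
  intro s
  induction s with
  | nil => intro _ _; exact ⟨[], [], rfl, by simp, by simp⟩
  | cons a t ih =>
    intro hc hd
    have had : a ≠ Ar.d := fun h => hd (h ▸ List.mem_cons_self)
    by_cases ha : a = Ar.one
    · subst ha
      obtain ⟨p, q, rfl, hp, hq⟩ := ih hc.tail (fun h' => hd (List.mem_cons_of_mem _ h'))
      refine ⟨Ar.one :: p, q, by simp, ?_, hq⟩
      intro c hcc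
      rcases List.mem_cons.mp hcc with h | h
      exacts [h, hp c h]
    · have h1 : Ar.one ∉ (a :: t) := no_one_of_head _ hc hd (by
        intro c hcc
        simp at hcc
        exact hcc ▸ ha)
      refine ⟨[], a :: t, rfl, by simp, fun c hcc => ?_⟩
      have hc1 : c ≠ Ar.one := fun h => h1 (h ▸ hcc)
      have hcd : c ≠ Ar.d := fun h => hd (h ▸ hcc)
      cases c with
      | one => exact absurd rfl hc1
      | d => exact absurd rfl hcd
      | two => exact Or.inl rfl
      | u => exact Or.inr rfl

lemma first_d : ∀ w : List Ar, Ar.d ∈ w → ∃ s t, w = s ++ Ar.d :: t ∧ Ar.d ∉ s := by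
  intro w
  induction w with
  | nil => intro h; simp at h
  | cons a t ih =>
    intro h
    by_cases ha : a = Ar.d
    · exact ⟨[], t, by simp [ha], by simp⟩
    · have : Ar.d ∈ t := by
        rcases List.mem_cons.mp h with h' | h'
        · exact absurd h'.symm ha
        · exact h'
      obtain ⟨s, t', rfl, hs⟩ := ih this
      refine ⟨a :: s, t', by simp, fun hm => ?_⟩
      rcases List.mem_cons.mp hm with h' | h'
      exacts [ha h'.symm, hs h']

lemma backward : ∀ n (w : List Ar), w.length ≤ n → w ≠ [] →
    w.getLast? = some Ar.one → List.Chain' R w → w ∈ rectRegex.matches' := by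
  intro n
  induction n with
  | zero =>
    intro w hlen hne _ _
    exact absurd (List.eq_nil_of_length_eq_zero (Nat.le_zero.mp hlen)) hne
  | succ n ih =>
    intro w hlen hne hlast hc
    by_cases hd : Ar.d ∈ w
    · obtain ⟨s, t, rfl, hs⟩ := first_d w hd
      have htne : t ≠ [] := by
        rintro rfl
        rw [show s ++ [Ar.d] = s ++ [Ar.d] from rfl, List.getLast?_concat] at hlast
        exact Ar.noConfusion (Option.some.inj hlast)
      have htlast : t.getLast? = some Ar.one := by
        rw [show s ++ Ar.d :: t = (s ++ [Ar.d]) ++ t by simp, List.getLast?_append,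
          List.getLast?_eq_getLast htne] at hlast
        rw [List.getLast?_eq_getLast htne]
        exact hlast
      have htc : List.Chain' R t := hc.suffix ⟨s ++ [Ar.d], by simp⟩
      have htlen : t.length ≤ n := by
        have := hlen
        simp [List.length_append] at this
        omega
      have ht := ih t htlen htne htlast htc
      rw [matches_eq, Language.mem_mul] at ht ⊢
      obtain ⟨x, hx, y, hy, rfl⟩ := ht
      have hsc : List.Chain' R s := hc.prefix ⟨Ar.d :: (x ++ y), rfl⟩
      obtain ⟨p, q, rfl, hp, hq⟩ := split_free s hsc hs
      refine ⟨(p ++ q ++ [Ar.d]) ++ x, append_mem_kstar (block_mem hp hq) hx, y, hy, by simp⟩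
    · obtain ⟨p, q, rfl, hp, hq⟩ := split_free w hc hd
      have hq0 : q = [] := by
        by_contra hqne
        rw [List.getLast?_append, List.getLast?_eq_getLast hqne] at hlast
        simp only [Option.or] at hlast
        have hm := hq _ (List.getLast_mem hqne)
        have h1 : q.getLast hqne = Ar.one := Option.some.inj hlast
        rcases hm with h | h <;> rw [h1] at h <;> exact Ar.noConfusion h
      subst hq0
      simp only [List.append_nil] at hlen hne hlast hc hd ⊢
      obtain ⟨a, t, rfl⟩ := List.exists_cons_of_ne_nil hne
      have ha : a = Ar.one := hp a (List.mem_cons_self)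
      subst ha
      rw [matches_eq, Language.mem_mul]
      refine ⟨[], ?_, Ar.one :: t, ?_, rfl⟩
      · rw [Language.mem_kstar]; exact ⟨[], rfl, by simp⟩
      · rw [Language.mem_mul]
        refine ⟨[Ar.one], rfl, t, mem_kstar_of_forall t fun c hc' => ?_, rfl⟩
        rw [hp c (List.mem_cons_of_mem _ hc')]; rfl

end RectAux

/-- The language of `(1*(2|u)*d)*1⁺` is exactly the set of nonempty words that end
in the letter `1` and contain no factor `21` and no factor `u1`. -/
theorem rectRegex_language (w : List Ar) :
    w ∈ rectRegex.matches' ↔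
      w ≠ [] ∧ w.getLast? = some Ar.one ∧
        ¬ [Ar.two, Ar.one] <:+: w ∧ ¬ [Ar.u, Ar.one] <:+: w := by
  constructor
  · intro h
    obtain ⟨h1, h2, h3⟩ := RectAux.forward h
    exact ⟨h1, h2, (RectAux.chain_iff w).mp h3⟩
  · rintro ⟨h1, h2, h3⟩
    exact RectAux.backward w.length w le_rfl h1 h2 ((RectAux.chain_iff w).mpr h3)
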